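/- If C is a 2-identifying code in the hexagonal grid G_H and every codeword c ∈ C satisfies s_2(C;c) ≤ 5, then the density of C is at least 1/5. -/

import Mathlib

def hexGraph : SimpleGraph (ℤ × ℤ) where
  Adj u v := (u.2 = v.2 ∧ (u.1 = v.1 + 1 ∨ u.1 = v.1 - 1)) ∨
    (u.1 = v.1 ∧ (((u.1 + u.2) % 2 = 0 ∧ u.2 = v.2 - 1) ∨ ((u.1 + u.2) % 2 ≠ 0 ∧ u.2 = v.2 + 1)))
  symm := ⟨by rintro ⟨a, b⟩ ⟨c, d⟩ h; dsimp only at *; omega⟩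
  loopless := ⟨by rintro ⟨a, b⟩ h; dsimp only at h; omega⟩

lemma hex_adj_iff (u v : ℤ × ℤ) : hexGraph.Adj u v ↔
    ((u.2 = v.2 ∧ (u.1 = v.1 + 1 ∨ u.1 = v.1 - 1)) ∨
    (u.1 = v.1 ∧ (((u.1 + u.2) % 2 = 0 ∧ u.2 = v.2 - 1) ∨ ((u.1 + u.2) % 2 ≠ 0 ∧ u.2 = v.2 + 1)))) :=
  Iff.rfl

lemma adj_right (x y : ℤ) : hexGraph.Adj (x, y) (x + 1, y) := by
  rw [hex_adj_iff]; left; exact ⟨rfl, Or.inr (by ring)⟩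

lemma up1 (x y : ℤ) : hexGraph.Reachable (x, y) (x, y + 1) := by
  by_cases h : (x + y) % 2 = 0
  · exact SimpleGraph.Adj.reachable (by rw [hex_adj_iff]; right; exact ⟨rfl, Or.inl ⟨h, by ring⟩⟩)
  · have h1 : hexGraph.Adj (x, y) (x + 1, y) := adj_right x y
    have h2 : hexGraph.Adj (x + 1, y) (x + 1, y + 1) := by
      rw [hex_adj_iff]; right; exact ⟨rfl, Or.inl ⟨by omega, by ring⟩⟩
    have h3 : hexGraph.Adj (x + 1, y + 1) (x, y + 1) := (adj_right x (y + 1)).symm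
    exact (h1.reachable.trans h2.reachable).trans h3.reachable

lemma reach_up (x y : ℤ) : ∀ k : ℕ, hexGraph.Reachable (x, y) (x, y + k)
  | 0 => by simpa using SimpleGraph.Reachable.refl _
  | (k + 1) => by
    have := (reach_up x y k).trans (up1 x (y + k))
    convert this using 2
    push_cast
    ring

lemma reach_y (x y y' : ℤ) : hexGraph.Reachable (x, y) (x, y') := by
  rcases le_total y y' with h | h
  · have := reach_up x y (y' - y).toNat
    rwa [Int.toNat_of_nonneg (by omega), show y + (y' - y) = y' by ring] at this
  · have := reach_up x y' (y - y').toNat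
    rw [Int.toNat_of_nonneg (by omega), show y' + (y - y') = y by ring] at this
    exact this.symm

lemma reach_xr (y x : ℤ) : ∀ k : ℕ, hexGraph.Reachable (x, y) (x + k, y)
  | 0 => by simpa using SimpleGraph.Reachable.refl _
  | (k + 1) => by
    have := (reach_xr y x k).trans (adj_right (x + k) y).reachable
    convert this using 2
    push_cast
    ring

lemma reach_x (y x x' : ℤ) : hexGraph.Reachable (x, y) (x', y) := by
  rcases le_total x x' with h | h
  · have := reach_xr y x (x' - x).toNat
    rwa [Int.toNat_of_nonneg (by omega), show x + (x' - x) = x' by ring] at this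
  · have := reach_xr y x' (x - x').toNat
    rw [Int.toNat_of_nonneg (by omega), show x' + (x - x') = x by ring] at this
    exact this.symm

lemma hex_preconnected : hexGraph.Preconnected := by
  rintro ⟨a, b⟩ ⟨c, d⟩
  exact (reach_y a b d).trans (reach_x d a c)

lemma walk_len {u v : ℤ × ℤ} (w : hexGraph.Walk u v) :
    (u.1 - v.1).natAbs + (u.2 - v.2).natAbs ≤ w.length := by
  induction w with
  | nil => simp
  | cons h p ih =>
    rw [hex_adj_iff] at h
    rw [SimpleGraph.Walk.length_cons]
    omega

def hexBall (r : ℕ) (u : ℤ × ℤ) : Set (ℤ × ℤ) := {x | hexGraph.dist u x ≤ r}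

def I2 (C : Set (ℤ × ℤ)) (u : ℤ × ℤ) : Set (ℤ × ℤ) := hexBall 2 u ∩ C

lemma dist_coord_bound {u v : ℤ × ℤ} (h : hexGraph.dist u v ≤ 2) :
    (u.1 - v.1).natAbs ≤ 2 ∧ (u.2 - v.2).natAbs ≤ 2 := by
  obtain ⟨w, hw⟩ := (hex_preconnected u v).exists_walk_length_eq_dist
  have := walk_len w
  omega

lemma ball_subset (c : ℤ × ℤ) :
    hexBall 2 c ⊆ (Set.Icc (c.1 - 2) (c.1 + 2)) ×ˢ (Set.Icc (c.2 - 2) (c.2 + 2)) := by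
  intro x hx
  obtain ⟨h1, h2⟩ := dist_coord_bound hx
  constructor <;> simp only [Set.mem_Icc] <;> omega

lemma ball_finite (c : ℤ × ℤ) : (hexBall 2 c).Finite :=
  Set.Finite.subset ((Set.finite_Icc _ _).prod (Set.finite_Icc _ _)) (ball_subset c)

lemma I2_finite (C : Set (ℤ × ℤ)) (u : ℤ × ℤ) : (I2 C u).Finite :=
  (ball_finite u).inter_of_left C


def isIdentifying2 (C : Set (ℤ × ℤ)) : Prop :=
  ∀ u : ℤ × ℤ, (I2 C u).Nonempty ∧ ∀ v : ℤ × ℤ, u ≠ v → I2 C u ≠ I2 C v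

noncomputable def share2 (C : Set (ℤ × ℤ)) (c : ℤ × ℤ) : ℝ :=
  ∑' u : (hexBall 2 c), 1 / ((I2 C ↑u).ncard : ℝ)

lemma share_eq (C : Set (ℤ × ℤ)) (c : ℤ × ℤ) :
    share2 C c = ∑ u ∈ (ball_finite c).toFinset, 1 / ((I2 C u).ncard : ℝ) := by
  unfold share2
  rw [tsum_subtype (hexBall 2 c) (fun x => 1 / ((I2 C x).ncard : ℝ))]
  rw [tsum_eq_sum (s := (ball_finite c).toFinset)
    (fun b hb => by
      rw [Set.indicator_of_notMem (by simpa using hb)])]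
  apply Finset.sum_congr rfl
  intro u hu
  rw [Set.indicator_of_mem (by simpa using hu)]

def Q (n : ℕ) : Set (ℤ × ℤ) := {p | |p.1| ≤ (n : ℤ) ∧ |p.2| ≤ (n : ℤ)}

noncomputable def QFin (n : ℕ) : Finset (ℤ × ℤ) := Finset.Icc (-(n : ℤ), -(n : ℤ)) ((n : ℤ), (n : ℤ))

lemma mem_QFin (n : ℕ) (p : ℤ × ℤ) : p ∈ QFin n ↔ |p.1| ≤ (n : ℤ) ∧ |p.2| ≤ (n : ℤ) := by
  simp [QFin, Finset.mem_Icc, Prod.le_def, abs_le]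
  omega

lemma Q_eq (n : ℕ) : Q n = ↑(QFin n) := by
  ext p; simp [Q, mem_QFin]

lemma Q_card (n : ℕ) : (QFin n).card = (2 * n + 1) ^ 2 := by
  rw [QFin, Finset.card_Icc_prod]
  simp [Int.card_Icc]
  rw [show ((n:ℤ) + 1 + n).toNat = 2 * n + 1 by omega]
  ring

lemma Q_ncard (n : ℕ) : (Q n).ncard = (2 * n + 1) ^ 2 := by
  rw [Q_eq, Set.ncard_coe_finset, Q_card]

lemma ball_symm {u c : ℤ × ℤ} : u ∈ hexBall 2 c ↔ c ∈ hexBall 2 u := by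
  simp only [hexBall, Set.mem_setOf_eq, SimpleGraph.dist_comm]

lemma main_count (C : Set (ℤ × ℤ)) (hC : isIdentifying2 C)
    (hs : ∀ c ∈ C, share2 C c ≤ 5) (n : ℕ) (hn : 2 ≤ n) :
    ((Q (n - 2)).ncard : ℝ) ≤ 5 * ((C ∩ Q n).ncard : ℝ) := by
  classical
  set A : Finset (ℤ × ℤ) := (QFin n).filter (· ∈ C) with hA
  have hAset : (↑A : Set (ℤ × ℤ)) = C ∩ Q n := by
    ext p; simp [hA, Q_eq, And.comm]
  set B := QFin (n - 2) with hB
  set f : ℤ × ℤ → ℝ := fun u => 1 / ((I2 C u).ncard : ℝ) with hf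
  have hf0 : ∀ u, 0 ≤ f u := fun u => by positivity
  have key : ∀ u ∈ B, A.filter (fun c => c ∈ hexBall 2 u) = (I2_finite C u).toFinset := by
    intro u hu
    rw [hB, mem_QFin] at hu
    ext c
    simp only [Finset.mem_filter, Set.Finite.mem_toFinset, I2, Set.mem_inter_iff, hA,
      mem_QFin]
    constructor
    · rintro ⟨⟨_, hc⟩, hb⟩; exact ⟨hb, hc⟩
    · rintro ⟨hb, hc⟩
      refine ⟨⟨?_, hc⟩, hb⟩
      have hd := dist_coord_bound (hb : hexGraph.dist u c ≤ 2)
      have h2 : ((n - 2 : ℕ) : ℤ) = (n : ℤ) - 2 := by omega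
      rw [h2] at hu
      simp only [abs_le] at hu ⊢
      omega
  have lower : (B.card : ℝ) ≤ ∑ c ∈ A, share2 C c := by
    have step1 : ∀ c ∈ A, ∑ u ∈ B, (if u ∈ hexBall 2 c then f u else 0) ≤ share2 C c := by
      intro c _
      rw [share_eq, ← Finset.sum_filter]
      apply Finset.sum_le_sum_of_subset_of_nonneg
      · intro u hu
        rw [Finset.mem_filter] at hu
        simpa using hu.2
      · intro u _ _; exact hf0 u
    calc (B.card : ℝ) = ∑ u ∈ B, (1 : ℝ) := by simp
      _ = ∑ u ∈ B, ∑ c ∈ A, (if u ∈ hexBall 2 c then f u else 0) := by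
          apply Finset.sum_congr rfl
          intro u hu
          have : ∀ c, (if u ∈ hexBall 2 c then f u else 0) =
              (if c ∈ hexBall 2 u then f u else 0) := by
            intro c; rw [ball_symm]
          simp_rw [this]
          rw [← Finset.sum_filter, key u hu, Finset.sum_const]
          have hcard : (I2_finite C u).toFinset.card = (I2 C u).ncard :=
            (Set.ncard_eq_toFinset_card _ (I2_finite C u)).symm
          have hpos : 0 < (I2 C u).ncard :=
            (Set.ncard_pos (I2_finite C u)).2 (hC u).1
          rw [hcard, nsmul_eq_mul, hf]
          field_simp
      _ = ∑ c ∈ A, ∑ u ∈ B, (if u ∈ hexBall 2 c then f u else 0) := Finset.sum_comm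
      _ ≤ ∑ c ∈ A, share2 C c := Finset.sum_le_sum step1
  have upper : ∑ c ∈ A, share2 C c ≤ 5 * (A.card : ℝ) := by
    calc ∑ c ∈ A, share2 C c ≤ ∑ c ∈ A, (5 : ℝ) := by
          apply Finset.sum_le_sum
          intro c hc
          rw [hA, Finset.mem_filter] at hc
          exact hs c hc.2
      _ = 5 * A.card := by rw [Finset.sum_const, nsmul_eq_mul]; ring
  have hBQ : ((Q (n - 2)).ncard : ℝ) = B.card := by
    rw [Q_eq, Set.ncard_coe_finset]
  have hAQ : ((C ∩ Q n).ncard : ℝ) = A.card := by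
    rw [← hAset, Set.ncard_coe_finset]
  rw [hBQ, hAQ]
  exact le_trans lower upper

noncomputable def density (C : Set (ℤ × ℤ)) : ℝ :=
  Filter.limsup (fun n : ℕ => ((C ∩ Q n).ncard : ℝ) / ((Q n).ncard : ℝ)) Filter.atTop

open Filter Topology

lemma b_tendsto :
    Tendsto (fun n : ℕ => ((2 * (n : ℝ) - 3) / (2 * (n : ℝ) + 1)) ^ 2 / 5) atTop
      (𝓝 (1 / 5)) := by
  have hg : Tendsto (fun n : ℕ => (2 * (n : ℝ) - 3) / (2 * (n : ℝ) + 1)) atTop (𝓝 1) := by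
    have heq : (fun n : ℕ => (2 * (n : ℝ) - 3) / (2 * (n : ℝ) + 1)) =
        fun n : ℕ => 1 - 4 / (2 * (n : ℝ) + 1) := by
      funext n
      have hne : (2 * (n : ℝ) + 1) ≠ 0 := by positivity
      field_simp
      ring
    rw [heq]
    have hden : Tendsto (fun n : ℕ => 2 * (n : ℝ) + 1) atTop atTop := by
      apply Filter.tendsto_atTop_add_const_right
      exact (tendsto_natCast_atTop_atTop (R := ℝ)).const_mul_atTop two_pos
    have h4 : Tendsto (fun n : ℕ => (4 : ℝ) / (2 * (n : ℝ) + 1)) atTop (𝓝 0) :=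
      Tendsto.div_atTop tendsto_const_nhds hden
    have := (tendsto_const_nhds (x := (1 : ℝ)) (f := atTop (α := ℕ))).sub h4
    simpa using this
  have := (hg.pow 2).div_const 5
  simpa using this

theorem stmt11 (C : Set (ℤ × ℤ)) (hC : isIdentifying2 C)
    (hs : ∀ c ∈ C, share2 C c ≤ 5) :
    density C ≥ 1 / 5 := by
  set a : ℕ → ℝ := fun n => ((C ∩ Q n).ncard : ℝ) / ((Q n).ncard : ℝ) with ha
  set b : ℕ → ℝ := fun n => ((2 * (n : ℝ) - 3) / (2 * (n : ℝ) + 1)) ^ 2 / 5 with hb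
  have ev : ∀ n : ℕ, 2 ≤ n → b n ≤ a n := by
    intro n hn
    have hmain := main_count C hC hs n hn
    have hq2 : ((Q (n - 2)).ncard : ℝ) = (2 * (n : ℝ) - 3) ^ 2 := by
      rw [Q_ncard]
      have h2 : ((n - 2 : ℕ) : ℝ) = (n : ℝ) - 2 := by
        push_cast [Nat.cast_sub hn]; ring
      push_cast [h2]
      ring
    have hqn : ((Q n).ncard : ℝ) = (2 * (n : ℝ) + 1) ^ 2 := by
      rw [Q_ncard]; push_cast; ring
    rw [hq2] at hmain
    rw [ha, hb]
    simp only []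
    rw [hqn, div_pow, div_div, div_le_div_iff₀ (by positivity) (by positivity)]
    nlinarith [sq_nonneg (2 * (n : ℝ) + 1), sq_nonneg (2 * (n : ℝ) - 3)]
  have hbd : IsBoundedUnder (· ≤ ·) atTop a := by
    apply isBoundedUnder_of
    refine ⟨1, fun n => ?_⟩
    rw [ha]
    simp only []
    have hQfin : (Q n).Finite := by rw [Q_eq]; exact (QFin n).finite_toSet
    have hsub : (C ∩ Q n).ncard ≤ (Q n).ncard :=
      Set.ncard_le_ncard Set.inter_subset_right hQfin
    have hpos : (0 : ℝ) < ((Q n).ncard : ℝ) := by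
      rw [Q_ncard]; positivity
    rw [div_le_one hpos]
    exact_mod_cast hsub
  have hcb : IsCoboundedUnder (· ≤ ·) atTop b := b_tendsto.isCoboundedUnder_le
  have hle : b ≤ᶠ[atTop] a := eventually_atTop.2 ⟨2, ev⟩
  have h1 : Filter.limsup b atTop = 1 / 5 := b_tendsto.limsup_eq
  have h2 : Filter.limsup b atTop ≤ Filter.limsup a atTop :=
    Filter.limsup_le_limsup hle hcb hbd
  rw [ge_iff_le, density, ← ha, ← h1]
  exact h2
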